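/- Define a : ℕ → ℝ by a = sup_{n≥0} 2^(-2^(3n)) χ_{[0, 2^(2^(3n)))}, let T be the geometric-mean transform (Tz)(k) = (∏_{m=0}^k z(m))^(1/(k+1)), and σ_M the M-fold dilation. Then for every l ≥ 1 the pointwise inequality T²a ≤ 2^l · σ_{2^l}(Ta) fails; specifically, for all sufficiently large n it fails at the point γ_n - 1 where γ_n = 2^(3n+2^(3n)). -/

import Mathlib

/-- The geometric-mean transform `(Tx)(k) = (∏_{m=0}^k x(m))^(1/(k+1))`. -/
noncomputable def opT (x : ℕ → ℝ) (k : ℕ) : ℝ :=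
  (∏ m ∈ Finset.range (k + 1), x m) ^ (1 / ((k : ℝ) + 1))

/-- The dilation `(σ_M x)(k) = x(⌊k/M⌋)`. -/
def dil (M : ℕ) (x : ℕ → ℝ) (k : ℕ) : ℝ := x (k / M)

/-- The sequence `a = sup_{n ≥ 0} 2^(-2^(3n)) χ_{[0, 2^(2^(3n)))}`. -/
noncomputable def seqA (k : ℕ) : ℝ :=
  ⨆ n : ℕ, if k < 2 ^ 2 ^ (3 * n) then ((2 : ℝ) ^ 2 ^ (3 * n))⁻¹ else 0

/-- `γ_n = 2^(3n + 2^(3n))`. -/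
def gam (n : ℕ) : ℕ := 2 ^ (3 * n + 2 ^ (3 * n))



/- ### auxiliary: powers of two with real exponent -/

noncomputable def tp (x : ℝ) : ℝ := (2:ℝ) ^ x
lemma tp_pos (x : ℝ) : 0 < tp x := Real.rpow_pos_of_pos two_pos x
lemma tp_add (x y : ℝ) : tp (x+y) = tp x * tp y := Real.rpow_add two_pos x y
lemma tp_le_tp {x y : ℝ} (h : x ≤ y) : tp x ≤ tp y := Real.rpow_le_rpow_of_exponent_le one_le_two h
lemma tp_lt_tp {x y : ℝ} (h : x < y) : tp x < tp y := Real.rpow_lt_rpow_of_exponent_lt one_lt_two h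
lemma tp_rpow (x y : ℝ) : (tp x) ^ y = tp (x*y) := (Real.rpow_mul (by norm_num) x y).symm
lemma tp_pow (x : ℝ) (D : ℕ) : (tp x) ^ D = tp (x*D) := by
  rw [← Real.rpow_natCast (tp x) D, tp_rpow]
lemma tp_nat (m : ℕ) : tp m = 2^m := Real.rpow_natCast 2 m
lemma inv_pow2 (m : ℕ) : ((2:ℝ)^m)⁻¹ = tp (-(m:ℝ)) := by
  rw [tp, Real.rpow_neg (by norm_num), Real.rpow_natCast]
lemma tp_sum {ι : Type*} (s : Finset ι) (e : ι → ℝ) : tp (∑ i ∈ s, e i) = ∏ i ∈ s, tp (e i) := by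
  classical
  induction s using Finset.cons_induction with
  | empty => simp [tp]
  | cons a s ha ih => rw [Finset.sum_cons, Finset.prod_cons, tp_add, ih]

lemma prod_ge_tp {K : ℕ} {f e : ℕ → ℝ} (h : ∀ m ∈ Finset.range K, tp (e m) ≤ f m) :
    tp (∑ m ∈ Finset.range K, e m) ≤ ∏ m ∈ Finset.range K, f m := by
  rw [tp_sum]; exact Finset.prod_le_prod (fun i _ => (tp_pos _).le) h

lemma opT_ge {x : ℕ → ℝ} {k : ℕ} {c : ℝ}
    (h : tp (c * ((k:ℝ)+1)) ≤ ∏ m ∈ Finset.range (k+1), x m) : tp c ≤ opT x k := by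
  have e : tp c = (tp (c * ((k:ℝ)+1))) ^ (1/((k:ℝ)+1)) := by
    rw [tp_rpow]; congr 1
    have : ((k:ℝ)+1) ≠ 0 := by positivity
    field_simp
  rw [opT, e]
  exact Real.rpow_le_rpow (tp_pos _).le h (by positivity)

lemma opT_le {x : ℕ → ℝ} {k : ℕ} {c : ℝ} (h0 : 0 ≤ ∏ m ∈ Finset.range (k+1), x m)
    (h : ∏ m ∈ Finset.range (k+1), x m ≤ tp (c * ((k:ℝ)+1))) : opT x k ≤ tp c := by
  have e : tp c = (tp (c * ((k:ℝ)+1))) ^ (1/((k:ℝ)+1)) := by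
    rw [tp_rpow]; congr 1
    have : ((k:ℝ)+1) ≠ 0 := by positivity
    field_simp
  rw [opT, e]
  exact Real.rpow_le_rpow h0 h (by positivity)

/- ### properties of seqA -/

lemma seqA_bdd (k : ℕ) : BddAbove (Set.range fun n : ℕ =>
    if k < 2 ^ 2 ^ (3 * n) then ((2 : ℝ) ^ 2 ^ (3 * n))⁻¹ else 0) := by
  refine ⟨1, ?_⟩; rintro x ⟨n, rfl⟩
  dsimp only; split
  · exact inv_le_one_of_one_le₀ (one_le_pow₀ one_le_two)
  · norm_num

lemma seqA_ge {k n : ℕ} (h : k < 2 ^ 2 ^ (3 * n)) : ((2 : ℝ) ^ 2 ^ (3 * n))⁻¹ ≤ seqA k := by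
  have := le_ciSup (seqA_bdd k) n
  unfold seqA; simpa [h] using this

lemma seqA_le {k n : ℕ} (h : 2 ^ 2 ^ (3 * n) ≤ k) :
    seqA k ≤ ((2 : ℝ) ^ 2 ^ (3 * (n+1)))⁻¹ := by
  refine ciSup_le fun m => ?_
  split
  · rename_i h2
    have hnm : n < m := by
      by_contra hc
      push_neg at hc
      exact absurd (lt_of_le_of_lt h h2)
        (not_lt.2 (Nat.pow_le_pow_right (by norm_num)
          (Nat.pow_le_pow_right (by norm_num) (by omega))))
    refine inv_anti₀ (by positivity) ?_
    exact pow_le_pow_right₀ one_le_two (Nat.pow_le_pow_right (by norm_num) (by omega))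
  · positivity

lemma seqA_le_one (k : ℕ) : seqA k ≤ 1 := by
  refine ciSup_le fun m => ?_
  split
  · exact inv_le_one_of_one_le₀ (one_le_pow₀ one_le_two)
  · norm_num

lemma seqA_pos (k : ℕ) : 0 < seqA k := by
  have h : k < 2 ^ 2 ^ (3 * k) := by
    calc k < 2 ^ k := Nat.lt_two_pow_self (n := k)
    _ ≤ 2 ^ 2 ^ (3*k) := Nat.pow_le_pow_right (by norm_num)
        (le_trans (Nat.lt_two_pow_self (n := k)).le (Nat.pow_le_pow_right (by norm_num) (by omega)))
  exact lt_of_lt_of_le (by positivity) (seqA_ge h)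

lemma seqA_ge' {k n : ℕ} (h : k < 2 ^ 2 ^ (3 * n)) : tp (-((2:ℝ)^(3*n))) ≤ seqA k := by
  have := seqA_ge h
  rwa [inv_pow2, Nat.cast_pow, Nat.cast_ofNat] at this

lemma seqA_le' {k n : ℕ} (h : 2 ^ 2 ^ (3 * n) ≤ k) : seqA k ≤ tp (-((2:ℝ)^(3*(n+1)))) := by
  have := seqA_le h
  rwa [inv_pow2, Nat.cast_pow, Nat.cast_ofNat] at this

/- ### harmonic sums -/

lemma harm (B : ℕ) (hB : 1 ≤ B) (t : ℕ) :
    (t:ℝ)/2 ≤ ∑ j ∈ Finset.Ico B (2^t*B), (1:ℝ)/((j:ℝ) + 1) := by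
  induction t with
  | zero => simp
  | succ t ih =>
    have hle : B ≤ 2^t*B := Nat.le_mul_of_pos_left B (by positivity)
    have he : 2^(t+1)*B = 2*(2^t*B) := by ring
    have hle2 : 2^t*B ≤ 2^(t+1)*B := by omega
    rw [← Finset.sum_Ico_consecutive _ hle hle2]
    have h2 : (1:ℝ)/2 ≤ ∑ j ∈ Finset.Ico (2^t*B) (2^(t+1)*B), (1:ℝ)/((j:ℝ)+1) := by
      have hcard : (Finset.Ico (2^t*B) (2^(t+1)*B)).card = 2^t*B := by
        rw [Nat.card_Ico]; omega
      have hbd : ∀ j ∈ Finset.Ico (2^t*B) (2^(t+1)*B),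
          (1:ℝ)/((2^(t+1)*B : ℕ):ℝ) ≤ 1/((j:ℝ)+1) := by
        intro j hj
        rw [Finset.mem_Ico] at hj
        apply one_div_le_one_div_of_le (by positivity)
        have : j + 1 ≤ 2^(t+1)*B := hj.2
        exact_mod_cast Nat.cast_le.2 this
      have := Finset.card_nsmul_le_sum _ _ _ hbd
      rw [hcard, nsmul_eq_mul] at this
      refine le_trans (le_of_eq ?_) this
      have hB' : (0:ℝ) < (B:ℝ) := by exact_mod_cast hB
      push_cast
      rw [pow_succ]
      field_simp
    push_cast at ih ⊢
    linarith

/- ### bounds on Ta -/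

lemma gam_le {n : ℕ} : gam n ≤ 2 ^ 2 ^ (3 * (n+1)) := by
  rw [gam]
  apply Nat.pow_le_pow_right (by norm_num)
  have h1 : 3*n < 2^(3*n) := Nat.lt_two_pow_self (n := 3*n)
  have h2 : 2^(3*(n+1)) = 8 * 2^(3*n) := by
    rw [show 3*(n+1) = 3*n + 3 by ring, pow_add]; ring
  omega

lemma Bn_le_gam {n : ℕ} : 2 ^ 2 ^ (3*n) ≤ gam n :=
  Nat.pow_le_pow_right (by norm_num) (by omega)

lemma Ta_lb1 {n m : ℕ} (h : m < 2 ^ 2 ^ (3*(n+1))) :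
    tp (-((2:ℝ)^(3*(n+1)))) ≤ opT seqA m := by
  apply opT_ge
  have hsum : -((2:ℝ)^(3*(n+1))) * ((m:ℝ)+1)
      = ∑ _i ∈ Finset.range (m+1), -((2:ℝ)^(3*(n+1))) := by
    rw [Finset.sum_const, Finset.card_range, nsmul_eq_mul]; push_cast; ring
  rw [hsum]
  exact prod_ge_tp fun i hi => seqA_ge' (lt_of_le_of_lt (by
    rw [Finset.mem_range] at hi; omega : i ≤ m) h)

lemma Ta_lb2 {n m : ℕ} (h1 : 2 ^ 2 ^ (3*n) ≤ m+1) (h2 : m+1 ≤ gam n) :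
    tp (-((2:ℝ)^(3*(n+1))) + 7 * (gam n : ℝ)/((m:ℝ)+1)) ≤ opT seqA m := by
  apply opT_ge
  have hm1 : ((m:ℝ)+1) ≠ 0 := by positivity
  obtain ⟨D, hD⟩ : ∃ D, m+1 = 2 ^ 2 ^ (3*n) + D := ⟨m+1-2^2^(3*n), by omega⟩
  have hexp : (-((2:ℝ)^(3*(n+1))) + 7 * (gam n : ℝ)/((m:ℝ)+1)) * ((m:ℝ)+1)
      = -((2:ℝ)^(3*n)) * (2^2^(3*n) : ℕ) + -((2:ℝ)^(3*(n+1))) * (D:ℕ) := by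
    have hg : (gam n : ℝ) = (2:ℝ)^(3*n) * ((2^2^(3*n):ℕ) : ℝ) := by
      rw [gam]; push_cast; rw [pow_add]
    have hm : ((m:ℝ)+1) = ((2^2^(3*n):ℕ) : ℝ) + (D:ℕ) := by
      exact_mod_cast congrArg (Nat.cast : ℕ → ℝ) hD
    field_simp
    rw [hg, hm]
    push_cast
    ring
  rw [hexp, hD, Finset.prod_range_add, tp_add]
  have p1 : tp (-((2:ℝ)^(3*n)) * ((2^2^(3*n) : ℕ):ℝ)) ≤ ∏ i ∈ Finset.range (2^2^(3*n)), seqA i := by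
    have hsum : -((2:ℝ)^(3*n)) * ((2^2^(3*n):ℕ):ℝ)
        = ∑ _i ∈ Finset.range (2^2^(3*n)), -((2:ℝ)^(3*n)) := by
      rw [Finset.sum_const, Finset.card_range, nsmul_eq_mul]; push_cast; ring
    rw [hsum]
    exact prod_ge_tp fun i hi => seqA_ge' (Finset.mem_range.1 hi)
  have p2 : tp (-((2:ℝ)^(3*(n+1))) * (D:ℝ)) ≤ ∏ j ∈ Finset.range D, seqA (2^2^(3*n) + j) := by
    have hsum : -((2:ℝ)^(3*(n+1))) * (D:ℝ)
        = ∑ _j ∈ Finset.range D, -((2:ℝ)^(3*(n+1))) := by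
      rw [Finset.sum_const, Finset.card_range, nsmul_eq_mul]; push_cast; ring
    rw [hsum]
    refine prod_ge_tp fun j hj => seqA_ge' ?_
    rw [Finset.mem_range] at hj
    have : 2^2^(3*n) + j < m + 1 := by omega
    exact lt_of_lt_of_le this (le_trans h2 gam_le)
  exact mul_le_mul p1 p2 (tp_pos _).le (le_trans (tp_pos _).le p1)

lemma Ta_ub {n m : ℕ} (h1 : 2 ^ 2 ^ (3*n) ≤ m+1) :
    opT seqA m ≤ tp (-((2:ℝ)^(3*(n+1))) + (2:ℝ)^(3*(n+1)) * ((2^2^(3*n):ℕ):ℝ) / ((m:ℝ)+1)) := by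
  have hm1 : ((m:ℝ)+1) ≠ 0 := by positivity
  obtain ⟨D, hD⟩ : ∃ D, m+1 = 2 ^ 2 ^ (3*n) + D := ⟨m+1-2^2^(3*n), by omega⟩
  apply opT_le (Finset.prod_nonneg fun i _ => (seqA_pos i).le)
  have hexp : (-((2:ℝ)^(3*(n+1))) + (2:ℝ)^(3*(n+1)) * ((2^2^(3*n):ℕ):ℝ) / ((m:ℝ)+1)) * ((m:ℝ)+1)
      = -((2:ℝ)^(3*(n+1))) * (D:ℕ) := by
    have hm : ((m:ℝ)+1) = ((2^2^(3*n):ℕ) : ℝ) + (D:ℕ) := by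
      exact_mod_cast congrArg (Nat.cast : ℕ → ℝ) hD
    field_simp
    rw [hm]
    push_cast
    ring
  rw [hexp, hD, Finset.prod_range_add]
  have p1 : ∏ i ∈ Finset.range (2^2^(3*n)), seqA i ≤ 1 :=
    Finset.prod_le_one (fun i _ => (seqA_pos i).le) (fun i _ => seqA_le_one i)
  have p2 : ∏ j ∈ Finset.range D, seqA (2^2^(3*n) + j) ≤ tp (-((2:ℝ)^(3*(n+1))) * (D:ℝ)) := by
    rw [← tp_pow]
    calc ∏ j ∈ Finset.range D, seqA (2^2^(3*n) + j)
        ≤ ∏ _j ∈ Finset.range D, tp (-((2:ℝ)^(3*(n+1)))) :=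
          Finset.prod_le_prod (fun i _ => (seqA_pos _).le)
            (fun j _ => seqA_le' (Nat.le_add_right _ _))
      _ = tp (-((2:ℝ)^(3*(n+1)))) ^ D := by rw [Finset.prod_const, Finset.card_range]
  calc (∏ i ∈ Finset.range (2^2^(3*n)), seqA i) * ∏ j ∈ Finset.range D, seqA (2^2^(3*n) + j)
      ≤ 1 * tp (-((2:ℝ)^(3*(n+1))) * (D:ℝ)) := by
        refine mul_le_mul p1 p2 (Finset.prod_nonneg fun i _ => (seqA_pos _).le) (by norm_num)
    _ = tp (-((2:ℝ)^(3*(n+1))) * (D:ℕ)) := by rw [one_mul]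

lemma T2_lb (n : ℕ) :
    tp (-((2:ℝ)^(3*(n+1))) + 21*(n:ℝ)/2) ≤ opT (opT seqA) (gam n - 1) := by
  have hg1 : 1 ≤ gam n := Nat.one_le_two_pow
  have hBg : 2^2^(3*n) ≤ gam n := Bn_le_gam
  have hk : gam n - 1 + 1 = gam n := by omega
  apply opT_ge
  have hc : ((gam n - 1 : ℕ):ℝ) + 1 = (gam n : ℝ) := by exact_mod_cast hk
  rw [hk, hc]
  obtain ⟨D, hD⟩ : ∃ D, gam n = 2^2^(3*n) + D := ⟨gam n - 2^2^(3*n), by omega⟩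
  have hgcast : ((gam n:ℕ):ℝ) = ((2^2^(3*n):ℕ):ℝ) + (D:ℝ) := by exact_mod_cast hD
  have p1 : tp (-((2:ℝ)^(3*(n+1))) * ((2^2^(3*n):ℕ):ℝ))
      ≤ ∏ m ∈ Finset.range (2^2^(3*n)), opT seqA m := by
    have hsum : -((2:ℝ)^(3*(n+1))) * ((2^2^(3*n):ℕ):ℝ)
        = ∑ _i ∈ Finset.range (2^2^(3*n)), -((2:ℝ)^(3*(n+1))) := by
      rw [Finset.sum_const, Finset.card_range, nsmul_eq_mul]; push_cast; ring
    rw [hsum]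
    refine prod_ge_tp fun i hi => Ta_lb1 ?_
    rw [Finset.mem_range] at hi
    exact lt_of_lt_of_le hi (Nat.pow_le_pow_right (by norm_num)
      (Nat.pow_le_pow_right (by norm_num) (by omega)))
  have p2 : tp (∑ j ∈ Finset.range D,
        (-((2:ℝ)^(3*(n+1))) + 7*(gam n:ℝ)/(((2^2^(3*n)+j:ℕ):ℝ)+1)))
      ≤ ∏ j ∈ Finset.range D, opT seqA (2^2^(3*n)+j) := by
    refine prod_ge_tp fun j hj => Ta_lb2 (by omega) ?_
    rw [Finset.mem_range] at hj; omega
  have hsum2 : ∑ j ∈ Finset.range D,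
        (-((2:ℝ)^(3*(n+1))) + 7*(gam n:ℝ)/(((2^2^(3*n)+j:ℕ):ℝ)+1))
      = -((2:ℝ)^(3*(n+1))) * (D:ℝ)
        + 7*(gam n:ℝ) * (∑ j ∈ Finset.range D, 1/(((2^2^(3*n)+j:ℕ):ℝ)+1)) := by
    rw [Finset.sum_add_distrib, Finset.sum_const, Finset.card_range, nsmul_eq_mul,
      Finset.mul_sum]
    congr 1
    · ring
    · refine Finset.sum_congr rfl fun j _ => ?_
      rw [mul_one_div]
  have hS : ((3*n:ℕ):ℝ)/2 ≤ ∑ j ∈ Finset.range D, 1/(((2^2^(3*n)+j:ℕ):ℝ)+1) := by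
    have hIco := harm (2^2^(3*n)) Nat.one_le_two_pow (3*n)
    rw [Finset.sum_Ico_eq_sum_range] at hIco
    have hD' : 2^(3*n)*2^2^(3*n) - 2^2^(3*n) = D := by
      have hgB : 2^(3*n)*2^2^(3*n) = gam n := by rw [gam, pow_add]
      omega
    rwa [hD'] at hIco
  have key : (-((2:ℝ)^(3*(n+1))) + 21*(n:ℝ)/2) * ((gam n:ℕ):ℝ)
      ≤ -((2:ℝ)^(3*(n+1))) * ((2^2^(3*n):ℕ):ℝ)
        + (-((2:ℝ)^(3*(n+1))) * (D:ℝ)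
          + 7*(gam n:ℝ) * (∑ j ∈ Finset.range D, 1/(((2^2^(3*n)+j:ℕ):ℝ)+1))) := by
    have hgpos : (0:ℝ) ≤ 7*((gam n:ℕ):ℝ) := by positivity
    have h7 : 7*((gam n:ℕ):ℝ) * (((3*n:ℕ):ℝ)/2)
        ≤ 7*((gam n:ℕ):ℝ) * (∑ j ∈ Finset.range D, 1/(((2^2^(3*n)+j:ℕ):ℝ)+1)) :=
      mul_le_mul_of_nonneg_left hS hgpos
    have heq : (-((2:ℝ)^(3*(n+1))) + 21*(n:ℝ)/2) * ((gam n:ℕ):ℝ)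
        = -((2:ℝ)^(3*(n+1))) * ((2^2^(3*n):ℕ):ℝ)
          + (-((2:ℝ)^(3*(n+1))) * (D:ℝ) + 7*((gam n:ℕ):ℝ) * (((3*n:ℕ):ℝ)/2)) := by
      rw [hgcast]; push_cast; ring
    rw [heq]; linarith
  calc tp ((-((2:ℝ)^(3*(n+1))) + 21*(n:ℝ)/2) * ((gam n:ℕ):ℝ))
      ≤ tp (-((2:ℝ)^(3*(n+1))) * ((2^2^(3*n):ℕ):ℝ)
          + (-((2:ℝ)^(3*(n+1))) * (D:ℝ)
            + 7*(gam n:ℝ) * (∑ j ∈ Finset.range D, 1/(((2^2^(3*n)+j:ℕ):ℝ)+1)))) :=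
        tp_le_tp key
    _ = tp (-((2:ℝ)^(3*(n+1))) * ((2^2^(3*n):ℕ):ℝ))
        * tp (-((2:ℝ)^(3*(n+1))) * (D:ℝ)
            + 7*(gam n:ℝ) * (∑ j ∈ Finset.range D, 1/(((2^2^(3*n)+j:ℕ):ℝ)+1))) := tp_add _ _
    _ ≤ (∏ m ∈ Finset.range (2^2^(3*n)), opT seqA m)
        * ∏ j ∈ Finset.range D, opT seqA (2^2^(3*n)+j) := by
        refine mul_le_mul p1 ?_ (tp_pos _).le (le_trans (tp_pos _).le p1)
        rw [← hsum2]; exact p2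
    _ = ∏ m ∈ Finset.range (gam n), opT seqA m := by rw [hD, Finset.prod_range_add]

/-- For every `l ≥ 1` the pointwise inequality `T²a ≤ 2^l σ_{2^l}(Ta)` fails;
specifically, for all sufficiently large `n` it fails at the point `γ_n - 1`. -/
theorem stmt_12 :
    ∀ l : ℕ, 1 ≤ l →
      (¬ ∀ k, opT (opT seqA) k ≤ (2 : ℝ) ^ l * dil (2 ^ l) (opT seqA) k) ∧
      ∃ N : ℕ, ∀ n ≥ N,
        ¬ opT (opT seqA) (gam n - 1) ≤ (2 : ℝ) ^ l * dil (2 ^ l) (opT seqA) (gam n - 1) := by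
  intro l hl
  have key : ∀ n, 2*l + 16*2^l ≤ n →
      ¬ opT (opT seqA) (gam n - 1) ≤ (2:ℝ)^l * dil (2^l) (opT seqA) (gam n - 1) := by
    intro n hn
    have hp : 1 ≤ 2^l := Nat.one_le_two_pow
    have hl2 : l < 2^l := Nat.lt_two_pow_self (n := l)
    have hln : l ≤ 3*n := by omega
    have hel : l ≤ 3*n + 2^(3*n) := le_trans hln (Nat.le_add_right _ _)
    have hgame : gam n = 2^l * 2^(3*n+2^(3*n)-l) := by
      rw [gam, ← pow_add]; congr 1; omega
    have hM : 1 ≤ 2^(3*n+2^(3*n)-l) := Nat.one_le_two_pow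
    have hdiv : (gam n - 1)/2^l = 2^(3*n+2^(3*n)-l) - 1 := by
      obtain ⟨M, hMe⟩ : ∃ M, 2^(3*n+2^(3*n)-l) = M+1 := ⟨2^(3*n+2^(3*n)-l)-1, by omega⟩
      rw [hMe] at hgame
      have hsplit : gam n - 1 = (2^l - 1) + 2^l * M := by
        have h2 : 2^l*(M+1) = 2^l*M + 2^l := by ring
        omega
      rw [hsplit, Nat.add_mul_div_left _ _ (by positivity : 0 < 2^l),
        Nat.div_eq_of_lt (by omega)]
      omega
    set m := 2^(3*n+2^(3*n)-l) - 1 with hmdef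
    have hm1 : m + 1 = 2^(3*n+2^(3*n)-l) := by omega
    have hB_le : 2^2^(3*n) ≤ m+1 := by
      rw [hm1]; exact Nat.pow_le_pow_right (by norm_num) (by omega)
    have hub := Ta_ub (n := n) (m := m) hB_le
    have hfrac : (2:ℝ)^(3*(n+1)) * ((2^2^(3*n):ℕ):ℝ) / ((m:ℝ)+1) = 8*(2:ℝ)^l := by
      have hm1' : ((m:ℝ)+1) = ((2^(3*n+2^(3*n)-l):ℕ):ℝ) := by exact_mod_cast hm1
      rw [hm1', div_eq_iff (by positivity)]
      have hnat : 2^(3*(n+1)) * 2^(2^(3*n)) = 8 * 2^l * 2^(3*n+2^(3*n)-l) := by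
        rw [show (8:ℕ) = 2^3 from rfl, ← pow_add, ← pow_add, ← pow_add]
        congr 1; omega
      exact_mod_cast hnat
    rw [hfrac] at hub
    have hRHS : (2:ℝ)^l * dil (2^l) (opT seqA) (gam n - 1)
        ≤ tp ((l:ℝ) + (-((2:ℝ)^(3*(n+1))) + 8*(2:ℝ)^l)) := by
      have hd : dil (2^l) (opT seqA) (gam n - 1) = opT seqA m := by
        simp only [dil, hdiv]
      rw [hd, tp_add, tp_nat]
      exact mul_le_mul_of_nonneg_left hub (by positivity)
    have hLHS := T2_lb n
    intro hcontra
    have hnat2 : 2*l + 16*2^l < 21*n := by omega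
    have hlt : (l:ℝ) + (-((2:ℝ)^(3*(n+1))) + 8*(2:ℝ)^l)
        < -((2:ℝ)^(3*(n+1))) + 21*(n:ℝ)/2 := by
      have : (2*l + 16*2^l : ℕ) < ((21*n : ℕ)) := hnat2
      have hc : (2*(l:ℝ) + 16*(2:ℝ)^l) < 21*(n:ℝ) := by exact_mod_cast this
      linarith
    have := lt_of_le_of_lt hRHS (lt_of_lt_of_le (tp_lt_tp hlt) hLHS)
    linarith
  exact ⟨fun hall => key _ le_rfl (hall _), ⟨2*l+16*2^l, fun n hn => key n hn⟩⟩
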